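/- Let X be a one-sided shift space and T_X its hom tree-shift. Then T_X is CPC-irreducible (CPC IR) if and only if T_X is irreducible (IR). -/

import Mathlib

namespace TreeShiftPaper

/-- Words over the alphabet `Σ = {0, …, k-1}`: nodes of the `k`-tree. -/
abbrev Word (k : ℕ) := List (Fin k)

variable {k : ℕ} {A : Type*}

/-- A set of words is prefix-closed if it contains every prefix of each of its elements. -/
def PrefixClosed (S : Set (Word k)) : Prop :=
  ∀ w ∈ S, ∀ v : Word k, v <+: w → v ∈ S

/-- The pattern with support `S` and labels `u` appears in the labeled tree `t`. -/
def PatternAppears (t : Word k → A) (S : Set (Word k)) (u : Word k → A) : Prop :=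
  ∃ s : Word k, ∀ w ∈ S, t (s ++ w) = u w

/-- The set of labeled trees avoiding every pattern of the forbidden family `F`. -/
def treeShiftOf (F : Set ((Set (Word k)) × (Word k → A))) : Set (Word k → A) :=
  {t | ∀ p ∈ F, ¬ PatternAppears t p.1 p.2}

/-- `T` is a tree-shift: it is defined by some forbidden set of patterns
(each with finite prefix-closed support). -/
def IsTreeShift (T : Set (Word k → A)) : Prop :=
  ∃ F : Set ((Set (Word k)) × (Word k → A)),
    (∀ p ∈ F, p.1.Finite ∧ PrefixClosed p.1) ∧ T = treeShiftOf F

/-- `T` is a tree-shift of finite type: the forbidden set can be chosen finite. -/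
def IsTreeSFT (T : Set (Word k → A)) : Prop :=
  ∃ F : Set ((Set (Word k)) × (Word k → A)),
    F.Finite ∧ (∀ p ∈ F, p.1.Finite ∧ PrefixClosed p.1) ∧ T = treeShiftOf F

/-- The finite word `w` occurs in the one-sided sequence `x` at position `i`. -/
def OccursAt (x : ℕ → A) (i : ℕ) (w : List A) : Prop :=
  ∀ j : Fin w.length, x (i + (j : ℕ)) = w.get j

/-- The one-sided shift space defined by the forbidden set of words `F`. -/
def shiftOf (F : Set (List A)) : Set (ℕ → A) :=
  {x | ∀ w ∈ F, ∀ i : ℕ, ¬ OccursAt x i w}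

/-- `X` is a one-sided shift space. -/
def IsShift (X : Set (ℕ → A)) : Prop := ∃ F : Set (List A), X = shiftOf F

/-- `X` is a one-sided shift of finite type. -/
def IsSFT (X : Set (ℕ → A)) : Prop :=
  ∃ F : Set (List A), F.Finite ∧ X = shiftOf F

/-- A chain: an infinite path in the tree starting at the root. -/
def IsChain (c : ℕ → Word k) : Prop :=
  c 0 = [] ∧ ∀ n : ℕ, ∃ i : Fin k, c (n + 1) = c n ++ [i]

/-- The hom tree-shift associated with a one-sided shift space `X`: labeled trees whose
projection along every chain lies in `X`. -/
def homTree (k : ℕ) (X : Set (ℕ → A)) : Set (Word k → A) :=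
  {t | ∀ c : ℕ → Word k, IsChain c → (fun n => t (c n)) ∈ X}

/-- `Y` is a sofic one-sided shift: image of an SFT under a sliding block code induced
by an `n`-block map. -/
def IsSofic (Y : Set (ℕ → A)) : Prop :=
  ∃ (B : Type) (_ : Fintype B) (X : Set (ℕ → B)) (n : ℕ) (f : (ℕ → B) → A),
    IsSFT X ∧ (∀ u v : ℕ → B, (∀ j < n, u j = v j) → f u = f v) ∧
    (fun x : ℕ → B => fun i => f (fun j => x (i + j))) '' X = Y

/-- `T` is a sofic tree-shift: image of a tree-SFT under the map induced by an
`n`-block map. -/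
def IsSoficTree (T : Set (Word k → A)) : Prop :=
  ∃ (B : Type) (_ : Fintype B) (T' : Set (Word k → B)) (n : ℕ) (g : (Word k → B) → A),
    IsTreeSFT T' ∧
    (∀ u v : Word k → B, (∀ w : Word k, w.length ≤ n → u w = v w) → g u = g v) ∧
    (fun t : Word k → B => fun w => g (fun z => t (w ++ z))) '' T' = T

/-- The Markov tree-shift determined by `k` binary `d × d` transition matrices. -/
def markovTree (k d : ℕ) (M : Fin k → Matrix (Fin d) (Fin d) Bool) :
    Set (Word k → Fin d) :=
  {t | ∀ w : Word k, ∀ i : Fin k, M i (t w) (t (w ++ [i])) = true}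

/-- The one-sided Markov (vertex) shift determined by a binary `d × d` matrix. -/
def markovShift (d : ℕ) (M : Matrix (Fin d) (Fin d) Bool) : Set (ℕ → Fin d) :=
  {x | ∀ i : ℕ, M (x i) (x (i + 1)) = true}

/-- The pattern with support `S` and labels `u` is admissible in `T`. -/
def AdmissiblePattern (T : Set (Word k → A)) (S : Set (Word k)) (u : Word k → A) : Prop :=
  ∃ t ∈ T, ∃ s : Word k, ∀ w ∈ S, t (s ++ w) = u w

/-- The `n`-block `u` (a labeling of `Δ_n`) is admissible in `T`. -/
def AdmissibleBlock (T : Set (Word k → A)) (n : ℕ) (u : Word k → A) : Prop :=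
  ∃ t ∈ T, ∃ s : Word k, ∀ w : Word k, w.length ≤ n → t (s ++ w) = u w

/-- Word distance on the `k`-tree:
`d(x,y) = |x| + |y| - 2 · max{|w| : w` a common prefix of `x` and `y}`. -/
noncomputable def wordDist (x y : Word k) : ℕ :=
  x.length + y.length - 2 * sSup {m : ℕ | ∃ w : Word k, w <+: x ∧ w <+: y ∧ w.length = m}

/-- The boundary `∂S = {w ∈ S : wΣ ∩ S = ∅}` of a support `S`. -/
def boundary (S : Set (Word k)) : Set (Word k) :=
  {w | w ∈ S ∧ ∀ i : Fin k, w ++ [i] ∉ S}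

/-- A complete prefix code: a finite prefix set such that every word of length at least
`max_{z ∈ P} |z|` has a prefix in `P`. -/
def IsCPC (P : Set (Word k)) : Prop :=
  P.Finite ∧ (∀ x ∈ P, ∀ y ∈ P, x <+: y → x = y) ∧
  ∀ w : Word k, (∀ z ∈ P, z.length ≤ w.length) → ∃ x ∈ P, x <+: w

/-- Strong irreducibility with gap `N`. -/
def SIGap (T : Set (Word k → A)) (N : ℕ) : Prop :=
  ∀ (Su Sv : Set (Word k)) (u v : Word k → A),
    Su.Finite → PrefixClosed Su → Sv.Finite → PrefixClosed Sv →
    AdmissiblePattern T Su u → AdmissiblePattern T Sv v →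
    ∀ w : Word k, (∀ h ∈ Su, N ≤ wordDist w h) →
      ∃ t ∈ T, (∀ z ∈ Su, t z = u z) ∧ ∀ z ∈ Sv, t (w ++ z) = v z

/-- `T` is strongly irreducible (SI). -/
def SI (T : Set (Word k → A)) : Prop := ∃ N : ℕ, SIGap T N

/-- `T` is block gluing (BG). -/
def BG (T : Set (Word k → A)) : Prop :=
  ∃ N : ℕ, ∀ (n m : ℕ) (u v : Word k → A),
    AdmissibleBlock T n u → AdmissibleBlock T m v →
    ∀ w : Word k, N + n ≤ w.length →
      ∃ t ∈ T, (∀ z : Word k, z.length ≤ n → t z = u z) ∧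
        ∀ z : Word k, z.length ≤ m → t (w ++ z) = v z

/-- `T` is topologically mixing (TM). -/
def TM (T : Set (Word k → A)) : Prop :=
  ∀ H₁ H₂ : Set (Word k), H₁.Finite → H₂.Finite →
    ∃ N : ℕ, ∀ t₁ ∈ T, ∀ t₂ ∈ T, ∀ w : Word k, (∀ h ∈ H₁, N ≤ wordDist w h) →
      ∃ t ∈ T, (∀ z ∈ H₁, t z = t₁ z) ∧ ∀ z ∈ H₂, t (w ++ z) = t₂ z

/-- `T` is irreducible (IR). -/
def IR (T : Set (Word k → A)) : Prop :=
  ∀ (n m : ℕ) (u v : Word k → A),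
    AdmissibleBlock T n u → AdmissibleBlock T m v →
    ∃ w : Word k, n < w.length ∧
      ∃ t ∈ T, (∀ z : Word k, z.length ≤ n → t z = u z) ∧
        ∀ z : Word k, z.length ≤ m → t (w ++ z) = v z

/-- `T` is CPC-strongly irreducible via the prefix set `P`. -/
def CPCSIWith (T : Set (Word k → A)) (P : Set (Word k)) : Prop :=
  ∀ (Su Sv : Set (Word k)) (u v : Word k → A),
    Su.Finite → PrefixClosed Su → Sv.Finite → PrefixClosed Sv →
    AdmissiblePattern T Su u → AdmissiblePattern T Sv v →
    ∃ t ∈ T, (∀ z ∈ Su, t z = u z) ∧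
      ∀ w ∈ boundary Su, ∀ z ∈ P, ∀ y ∈ Sv, t (w ++ z ++ y) = v y

/-- `T` is CPC-strongly irreducible (CPC SI). -/
def CPCSI (T : Set (Word k → A)) : Prop := ∃ P : Set (Word k), IsCPC P ∧ CPCSIWith T P

/-- `T` is uniform CPC-strongly irreducible (CPC USI): CPC SI with `P = Σ^N`. -/
def CPCUSI (T : Set (Word k → A)) : Prop :=
  ∃ N : ℕ, CPCSIWith T {z : Word k | z.length = N}

/-- `T` is CPC-block gluing via the prefix set `P`. -/
def CPCBGWith (T : Set (Word k → A)) (P : Set (Word k)) : Prop :=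
  ∀ (n m : ℕ) (u v : Word k → A),
    AdmissibleBlock T n u → AdmissibleBlock T m v →
    ∃ t ∈ T, (∀ z : Word k, z.length ≤ n → t z = u z) ∧
      ∀ w : Word k, w.length = n → ∀ z ∈ P, ∀ y : Word k, y.length ≤ m →
        t (w ++ z ++ y) = v y

/-- `T` is CPC-block gluing (CPC BG). -/
def CPCBG (T : Set (Word k → A)) : Prop := ∃ P : Set (Word k), IsCPC P ∧ CPCBGWith T P

/-- `T` is uniform CPC-block gluing (CPC UBG): CPC BG with `P = Σ^N`. -/
def CPCUBG (T : Set (Word k → A)) : Prop :=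
  ∃ N : ℕ, CPCBGWith T {z : Word k | z.length = N}

/-- `T` is CPC-irreducible (CPC IR). -/
def CPCIR (T : Set (Word k → A)) : Prop :=
  ∀ (n m : ℕ) (u v : Word k → A),
    AdmissibleBlock T n u → AdmissibleBlock T m v →
    ∃ P : Set (Word k), IsCPC P ∧ (∀ z ∈ P, n + 1 ≤ z.length) ∧
      ∃ t ∈ T, (∀ z : Word k, z.length ≤ n → t z = u z) ∧
        ∀ w ∈ P, ∀ y : Word k, y.length ≤ m → t (w ++ y) = v y

/-- The finite word `u` is admissible in the one-sided shift space `X`. -/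
def WordAdmissible (X : Set (ℕ → A)) (u : List A) : Prop :=
  ∃ x ∈ X, ∃ i : ℕ, OccursAt x i u

/-- The one-sided shift space `X` is topologically mixing. -/
def MixingShift (X : Set (ℕ → A)) : Prop :=
  ∀ u v : List A, WordAdmissible X u → WordAdmissible X v →
    ∃ N : ℕ, ∀ n ≥ N, ∃ x ∈ X, OccursAt x 0 u ∧ OccursAt x (u.length + n) v

/-- The one-sided shift space `X` is transitive (irreducible). -/
def TransitiveShift (X : Set (ℕ → A)) : Prop :=
  ∀ u v : List A, WordAdmissible X u → WordAdmissible X v →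
    ∃ x ∈ X, ∃ n : ℕ, u.length ≤ n ∧ OccursAt x 0 u ∧ OccursAt x n v

end TreeShiftPaper

namespace TreeShiftPaper

variable {k : ℕ} {A : Type*}

lemma shift_mem {X : Set (ℕ → A)} (hX : IsShift X) {x : ℕ → A} (hx : x ∈ X) (d : ℕ) :
    (fun i => x (i + d)) ∈ X := by
  obtain ⟨F, rfl⟩ := hX
  intro w hw i hocc
  refine hx w hw (i + d) (fun j => ?_)
  have := hocc j
  simpa [Nat.add_right_comm] using this

lemma chain_length {c : ℕ → Word k} (hc : IsChain c) : ∀ i, (c i).length = i := by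
  intro i
  induction i with
  | zero => simp [hc.1]
  | succ i ih => obtain ⟨j, hj⟩ := hc.2 i; simp [hj, ih]

lemma chain_take {c : ℕ → Word k} (hc : IsChain c) : ∀ {i j}, i ≤ j → c i = (c j).take i := by
  intro i j hij
  induction j with
  | zero => interval_cases i; simp [hc.1]
  | succ j ih =>
    rcases Nat.lt_or_ge i (j+1) with h | h
    · obtain ⟨l, hl⟩ := hc.2 j
      rw [hl, List.take_append_of_le_length (by rw [chain_length hc]; omega),
        ← ih (by omega)]
    · have : i = j + 1 := by omega
      subst this
      rw [List.take_of_length_le (by rw [chain_length hc])]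

/-- Extend a word to an infinite chain, continuing with letter `o`. -/
def ext (o : Fin k) (s : Word k) : ℕ → Word k
  | 0 => []
  | (i+1) => ext o s i ++ [if h : i < s.length then s.get ⟨i, h⟩ else o]

lemma ext_isChain (o : Fin k) (s : Word k) : IsChain (ext o s) :=
  ⟨rfl, fun _ => ⟨_, rfl⟩⟩

lemma ext_eq_take (o : Fin k) (s : Word k) : ∀ i, i ≤ s.length → ext o s i = s.take i := by
  intro i
  induction i with
  | zero => simp [ext]
  | succ i ih =>
    intro hi
    have h : i < s.length := by omega
    rw [ext, ih (by omega), dif_pos h]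
    simpa using List.take_concat_get s i h

lemma finite_length_le (k n : ℕ) : {l : Word k | l.length ≤ n}.Finite := by
  have : {l : Word k | l.length ≤ n} ⊆ ⋃ m ∈ Finset.range (n+1), {l : Word k | l.length = m} := by
    intro l hl
    simp only [Set.mem_iUnion, Finset.mem_range]
    exact ⟨l.length, Nat.lt_succ_of_le hl, rfl⟩
  exact Set.Finite.subset (Set.Finite.biUnion (Finset.range (n+1)).finite_toSet
    (fun m _ => List.finite_length_eq _ m)) this

end TreeShiftPaper

namespace TreeShiftPaper

/-- For a hom tree-shift `T_X`: CPC-irreducibility is equivalent to irreducibility. -/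
theorem stmt12 {k : ℕ} (hk : 2 ≤ k) {A : Type*} [Fintype A] (X : Set (ℕ → A))
    (hX : IsShift X) : CPCIR (homTree k X) ↔ IR (homTree k X) := by
  have hk0 : 0 < k := by omega
  constructor
  · -- CPC IR → IR
    intro hC n m u v hu hv
    obtain ⟨P, ⟨hPfin, hPpf, hPcov⟩, hPlen, t, ht, h1, h2⟩ := hC n m u v hu hv
    obtain ⟨x, hxP, -⟩ := hPcov (List.replicate (hPfin.toFinset.sup List.length) ⟨0, hk0⟩)
      (fun z hz => by
        simpa using Finset.le_sup (f := List.length) (hPfin.mem_toFinset.mpr hz))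
    exact ⟨x, by have := hPlen x hxP; omega, t, ht, h1, fun z hz => h2 x hxP z hz⟩
  · -- IR → CPC IR
    intro hIR n m u v hu hv
    classical
    set o : Fin k := ⟨0, hk0⟩ with ho
    have H : ∀ a : Word k, ∃ (wa : Word k) (ta : Word k → A),
        a.length = n → n < wa.length ∧ ta ∈ homTree k X ∧
          (∀ z : Word k, z.length ≤ n → ta z = u (a.take z.length)) ∧
          (∀ z : Word k, z.length ≤ m → ta (wa ++ z) = v z) := by
      intro a
      by_cases ha : a.length = n
      · obtain ⟨t₀, ht₀, s, hs⟩ := hu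
        have hx : (fun i => t₀ (ext o (s ++ a) i)) ∈ X := ht₀ _ (ext_isChain o (s ++ a))
        have hy : (fun i => t₀ (ext o (s ++ a) (i + s.length))) ∈ X := shift_mem hX hx s.length
        have hyu : ∀ i, i ≤ n → t₀ (ext o (s ++ a) (i + s.length)) = u (a.take i) := by
          intro i hi
          rw [ext_eq_take o (s ++ a) (i + s.length) (by rw [List.length_append]; omega),
            Nat.add_comm i s.length, List.take_length_add_append,
            hs (a.take i) (by rw [List.length_take]; omega)]
        have hB : AdmissibleBlock (homTree k X) n
            (fun z : Word k => t₀ (ext o (s ++ a) (z.length + s.length))) := by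
          refine ⟨fun z => t₀ (ext o (s ++ a) (z.length + s.length)), ?_, [], fun z _ => rfl⟩
          intro c hc
          have e : (fun i => t₀ (ext o (s ++ a) ((c i).length + s.length)))
              = (fun i => t₀ (ext o (s ++ a) (i + s.length))) :=
            funext fun i => by rw [chain_length hc i]
          show (fun i => t₀ (ext o (s ++ a) ((c i).length + s.length))) ∈ X
          rw [e]; exact hy
        obtain ⟨w, hwlen, t', ht', h1, h2⟩ := hIR n m _ v hB hv
        exact ⟨w, t', fun _ => ⟨hwlen, ht',
          fun z hz => by rw [h1 z hz, hyu z.length hz], h2⟩⟩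
      · exact ⟨[], fun _ => u [], fun h => absurd h ha⟩
    choose W Ta hWT using H
    set t : Word k → A := fun z =>
      if z.length ≤ n then u z
      else if z.length ≤ (W (z.take n)).length then Ta (z.take n) ((W (z.take n)).take z.length)
      else Ta (z.take n) (W (z.take n) ++ z.drop (W (z.take n)).length) with htdef
    have tval1 : ∀ z : Word k, z.length ≤ n → t z = u z := by
      intro z hz; simp only [htdef]; rw [if_pos hz]
    have tval2 : ∀ z : Word k, n < z.length → z.length ≤ (W (z.take n)).length →
        t z = Ta (z.take n) ((W (z.take n)).take z.length) := by
      intro z h1 h2; simp only [htdef]; rw [if_neg (by omega), if_pos h2]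
    have tval3 : ∀ z : Word k, n < z.length → (W (z.take n)).length < z.length →
        t z = Ta (z.take n) (W (z.take n) ++ z.drop (W (z.take n)).length) := by
      intro z h1 h2; simp only [htdef]; rw [if_neg (by omega), if_neg (by omega)]
    set P : Set (Word k) := {z | n < z.length ∧ z.length = (W (z.take n)).length} with hPdef
    have hmemP : ∀ z : Word k, z ∈ P ↔ n < z.length ∧ z.length = (W (z.take n)).length := by
      intro z; rw [hPdef]; rfl
    have hbuild : ∀ a : Word k, a.length = n →
        (a ++ List.replicate ((W a).length - n) o) ∈ P ∧
        (a ++ List.replicate ((W a).length - n) o).length = (W a).length := by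
      intro a ha
      have hL : n < (W a).length := (hWT a ha).1
      have hlen : (a ++ List.replicate ((W a).length - n) o).length = (W a).length := by
        simp [ha]; omega
      have htake : (a ++ List.replicate ((W a).length - n) o).take n = a := by
        conv_lhs => rw [← ha]
        exact List.take_left
      exact ⟨(hmemP _).mpr ⟨by omega, by rw [hlen, htake]⟩, hlen⟩
    refine ⟨P, ⟨?_, ?_, ?_⟩, ?_, t, ?_, fun z hz => tval1 z hz, ?_⟩
    · -- finiteness
      refine Set.Finite.subset
        (finite_length_le k ((finite_length_le k n).toFinset.sup (fun a => (W a).length)))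
        (fun z hz => ?_)
      obtain ⟨h1, h2⟩ := (hmemP z).mp hz
      have : (z.take n).length ≤ n := by rw [List.length_take]; omega
      have hle : z.length ≤ (finite_length_le k n).toFinset.sup (fun a => (W a).length) :=
        h2.le.trans (Finset.le_sup (f := fun a => (W a).length)
          ((finite_length_le k n).mem_toFinset.mpr this))
      exact hle
    · -- prefix-free
      intro x hx y hy hxy
      obtain ⟨hx1, hx2⟩ := (hmemP x).mp hx
      obtain ⟨hy1, hy2⟩ := (hmemP y).mp hy
      have hxy' : x = y.take x.length := List.prefix_iff_eq_take.mp hxy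
      have htn : x.take n = y.take n := by
        rw [hxy', List.take_take, min_eq_left (by omega)]
      have hlen : x.length = y.length := by rw [hx2, hy2, htn]
      rw [hxy', hlen, List.take_length]
    · -- covering
      intro w hw
      have hwn : n ≤ w.length := by
        by_contra hcon
        obtain ⟨hm, hl⟩ := hbuild (List.replicate n o) (by simp)
        have h1 := hw _ hm
        have h2 := (hWT (List.replicate n o) (by simp)).1
        omega
      have ha : (w.take n).length = n := by rw [List.length_take]; omega
      obtain ⟨hm, hl⟩ := hbuild (w.take n) ha
      have hL : n < (W (w.take n)).length := (hWT _ ha).1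
      have hwge : (W (w.take n)).length ≤ w.length := by
        have := hw _ hm; omega
      have hlen2 : (w.take (W (w.take n)).length).length = (W (w.take n)).length := by
        rw [List.length_take]; omega
      refine ⟨w.take (W (w.take n)).length, (hmemP _).mpr ⟨?_, ?_⟩, List.take_prefix _ _⟩
      · omega
      · have htt : (w.take (W (w.take n)).length).take n = w.take n := by
          rw [List.take_take, min_eq_left (by omega)]
        rw [hlen2, htt]
    · -- lengths ≥ n+1
      intro z hz
      have := ((hmemP z).mp hz).1
      omega
    · -- t ∈ homTree k X
      intro c hc
      have ha : (c n).length = n := chain_length hc n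
      obtain ⟨hL, hTmem, hTu, hTv⟩ := hWT (c n) ha
      set L := (W (c n)).length with hLdef
      set c' : ℕ → Word k :=
        fun i => if i ≤ L then (W (c n)).take i else W (c n) ++ (c i).drop L with hc'def
      have hc' : IsChain c' := by
        constructor
        · simp [hc'def]
        · intro i
          by_cases h : i + 1 ≤ L
          · refine ⟨(W (c n)).get ⟨i, by omega⟩, ?_⟩
            simp only [hc'def, if_pos h, if_pos (by omega : i ≤ L)]
            exact ((by simpa using List.take_concat_get (W (c n)) i (by omega)) :
              (W (c n)).take i ++ [(W (c n)).get ⟨i, by omega⟩] = (W (c n)).take (i+1)).symm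
          · by_cases h2 : i ≤ L
            · have hiL : i = L := by omega
              have hlen1 : ((c (i+1)).drop L).length = 1 := by
                rw [List.length_drop, chain_length hc]; omega
              obtain ⟨j, hj⟩ := List.length_eq_one_iff.mp hlen1
              refine ⟨j, ?_⟩
              simp only [hc'def, if_pos h2, if_neg h]
              rw [hj, hiL, List.take_length]
            · obtain ⟨j, hj⟩ := hc.2 i
              refine ⟨j, ?_⟩
              simp only [hc'def, if_neg h, if_neg h2]
              rw [hj, List.drop_append_of_le_length (by rw [chain_length hc]; omega),
                List.append_assoc]
      have key : ∀ i, t (c i) = Ta (c n) (c' i) := by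
        intro i
        have hci : (c i).length = i := chain_length hc i
        by_cases hi : i ≤ n
        · have e1 : t (c i) = u (c i) := tval1 _ (by omega)
          have e2 : c' i = (W (c n)).take i := by
            simp only [hc'def]; rw [if_pos (by omega)]
          have e3 : ((W (c n)).take i).length = i := by rw [List.length_take]; omega
          rw [e1, e2, hTu _ (by omega), e3, ← chain_take hc hi]
        · have htk : (c i).take n = c n := (chain_take hc (by omega : n ≤ i)).symm
          by_cases h2 : i ≤ L
          · rw [tval2 _ (by omega) (by rw [hci, htk]; omega), htk, hci]
            simp only [hc'def]; rw [if_pos h2]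
          · rw [tval3 _ (by omega) (by rw [hci, htk]; omega), htk]
            simp only [hc'def]; rw [if_neg h2, ← hLdef]
      have heq : (fun i => t (c i)) = (fun i => Ta (c n) (c' i)) := funext key
      show (fun i => t (c i)) ∈ X
      rw [heq]
      exact hTmem c' hc'
    · -- v at the CPC
      intro w' hw' y hy
      obtain ⟨hw1, hw2⟩ := (hmemP w').mp hw'
      have ha : (w'.take n).length = n := by rw [List.length_take]; omega
      obtain ⟨hL, hTmem, hTu, hTv⟩ := hWT _ ha
      have htake : (w' ++ y).take n = w'.take n :=
        List.take_append_of_le_length (by omega)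
      rcases eq_or_ne y [] with rfl | hne
      · rw [List.append_nil, tval2 w' hw1 (le_of_eq hw2), hw2, List.take_length]
        have := hTv [] (Nat.zero_le m)
        rwa [List.append_nil] at this
      · have hylen : 0 < y.length := List.length_pos_iff.mpr hne
        have h1 : (W ((w' ++ y).take n)).length < (w' ++ y).length := by
          rw [htake, ← hw2, List.length_append]; omega
        rw [tval3 (w' ++ y) (by rw [List.length_append]; omega) h1, htake, ← hw2,
          List.drop_left]
        exact hTv y hy

end TreeShiftPaper
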